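/- Let n ≥ 2 and c ≥ 2n be integers. Then any family F of functions f : {1,…,n} → {1,…,c} such that the images of any two members of F have nonempty intersection satisfies |F| ≤ n·c^{n−1}. -/

import Mathlib

open Finset

/-- Cardinality of the fiber `{g : Fin n → Fin c | g i = x₀}`. -/
private lemma fiber_card {n c : ℕ} (hn : 1 ≤ n) (i : Fin n) (x₀ : Fin c) :
    (Finset.univ.filter fun g : Fin n → Fin c => g i = x₀).card = c ^ (n - 1) := by
  classical
  have hc0 : 0 < c := x₀.pos
  have key : ((Finset.univ.filter fun g : Fin n → Fin c => g i = x₀) ×ˢ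
      (Finset.univ : Finset (Fin c))).card = (Finset.univ : Finset (Fin n → Fin c)).card := by
    apply card_nbij' (fun p => Function.update p.1 i p.2)
      (fun h => (Function.update h i x₀, h i))
    · intro p hp; exact mem_univ _
    · intro h hh
      simp only [mem_coe, mem_product, mem_filter, mem_univ, true_and]
      exact ⟨by simp, trivial⟩
    · rintro ⟨g, a⟩ hp
      simp only [mem_coe, mem_product, mem_filter, mem_univ, true_and] at hp
      have h1 : Function.update (Function.update g i a) i x₀ = g := by
        funext j
        by_cases hj : j = i
        · subst hj; simp [hp.1]
        · simp [Function.update_of_ne hj]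
      simp [h1]
    · intro h hh
      funext j
      by_cases hj : j = i
      · subst hj; simp
      · simp [Function.update_of_ne hj]
  rw [card_product, card_univ, card_univ, Fintype.card_fun, Fintype.card_fin,
    Fintype.card_fin] at key
  have h1 : n - 1 + 1 = n := Nat.succ_pred_eq_of_pos hn
  have hpow : c ^ n = c ^ (n - 1) * c := by
    calc c ^ n = c ^ (n - 1 + 1) := by rw [h1]
      _ = c ^ (n - 1) * c := pow_succ c (n - 1)
  rw [hpow] at key
  exact Nat.eq_of_mul_eq_mul_right hc0 key

/-- From the Erdős–Ko–Rado theorem: an intersecting family of nonempty subsets of `Fin c`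
of sizes at most `n` (with `2n ≤ c`) admits a size-preserving injection into the sets
containing a fixed element. -/
private lemma exists_size_preserving_inj {c n : ℕ} (hc : 2 * n ≤ c) (hc0 : 0 < c)
    (𝒮 : Finset (Finset (Fin c)))
    (hne : ∀ S ∈ 𝒮, S.Nonempty) (hsz : ∀ S ∈ 𝒮, S.card ≤ n)
    (hint : ∀ S ∈ 𝒮, ∀ T ∈ 𝒮, ¬ Disjoint S T) :
    ∃ Φ : Finset (Fin c) → Finset (Fin c), Set.InjOn Φ ↑𝒮 ∧
      ∀ S ∈ 𝒮, (⟨0, hc0⟩ : Fin c) ∈ Φ S ∧ (Φ S).card = S.card := by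
  classical
  set x₀ : Fin c := ⟨0, hc0⟩ with hx₀
  have key : ∀ k : ℕ, ∃ φ : Finset (Fin c) → Finset (Fin c),
      Set.InjOn φ ↑(𝒮.filter fun S => S.card = k) ∧
      ∀ S ∈ 𝒮.filter (fun S => S.card = k), x₀ ∈ φ S ∧ (φ S).card = k := by
    intro k
    rcases (𝒮.filter fun S => S.card = k).eq_empty_or_nonempty with he | hne'
    · exact ⟨id, by rw [he]; simp, by rw [he]; simp⟩
    obtain ⟨S₀, hS₀⟩ := hne'
    have hS₀' := mem_filter.1 hS₀
    have hk1 : 1 ≤ k := hS₀'.2 ▸ card_pos.2 (hne _ hS₀'.1)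
    have hkn : k ≤ n := hS₀'.2 ▸ hsz _ hS₀'.1
    have hekr : (𝒮.filter fun S => S.card = k).card ≤ (c - 1).choose (k - 1) := by
      apply Finset.erdos_ko_rado
      · intro S hS T hT
        have hS' := mem_filter.1 (mem_coe.1 hS)
        have hT' := mem_filter.1 (mem_coe.1 hT)
        exact hint _ hS'.1 _ hT'.1
      · intro S hS
        exact (mem_filter.1 (mem_coe.1 hS)).2
      · omega
    set A : Finset (Finset (Fin c)) :=
      ((Finset.univ.erase x₀).powersetCard (k - 1)).image (insert x₀) with hA
    have hAmem : ∀ S ∈ A, x₀ ∈ S ∧ S.card = k := by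
      intro S hS
      obtain ⟨s, hs, rfl⟩ := mem_image.1 hS
      rw [mem_powersetCard] at hs
      have hxs : x₀ ∉ s := fun hx => (mem_erase.1 (hs.1 hx)).1 rfl
      refine ⟨mem_insert_self _ _, ?_⟩
      rw [card_insert_of_notMem hxs, hs.2]; omega
    have hAcard : A.card = (c - 1).choose (k - 1) := by
      rw [hA, card_image_of_injOn, card_powersetCard, card_erase_of_mem (mem_univ _),
        card_univ, Fintype.card_fin]
      intro s hs t ht hst
      rw [mem_coe, mem_powersetCard] at hs ht
      have hxs : x₀ ∉ s := fun hx => (mem_erase.1 (hs.1 hx)).1 rfl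
      have hxt : x₀ ∉ t := fun hx => (mem_erase.1 (ht.1 hx)).1 rfl
      rw [← erase_insert hxs, ← erase_insert hxt, hst]
    obtain ⟨B, hBA, hBcard⟩ := exists_subset_card_eq (s := A) (n := (𝒮.filter fun S => S.card = k).card)
      (by rw [hAcard]; exact hekr)
    have hcards : (𝒮.filter fun S => S.card = k).card = B.card := hBcard.symm
    set e := Finset.equivOfCardEq hcards with he2
    refine ⟨fun S => if h : S ∈ 𝒮.filter (fun S => S.card = k) then (e ⟨S, h⟩ : Finset (Fin c))
      else S, ?_, ?_⟩
    · intro S hS T hT heq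
      beta_reduce at heq
      rw [dif_pos (mem_coe.1 hS), dif_pos (mem_coe.1 hT)] at heq
      exact congrArg Subtype.val (e.injective (Subtype.ext heq))
    · intro S hS
      beta_reduce
      rw [dif_pos hS]
      exact hAmem _ (hBA (e ⟨S, hS⟩).2)
  choose φ hφinj hφmem using key
  refine ⟨fun S => φ S.card S, ?_, ?_⟩
  · intro S hS T hT heq
    beta_reduce at heq
    have hS' := mem_coe.1 hS
    have hT' := mem_coe.1 hT
    have hcS : (φ S.card S).card = S.card := (hφmem S.card S (mem_filter.2 ⟨hS', rfl⟩)).2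
    have hcT : (φ T.card T).card = T.card := (hφmem T.card T (mem_filter.2 ⟨hT', rfl⟩)).2
    have hST : S.card = T.card := by
      have h3 := congrArg Finset.card heq
      rwa [hcS, hcT] at h3
    apply hφinj S.card (mem_coe.2 (mem_filter.2 ⟨hS', rfl⟩))
      (mem_coe.2 (mem_filter.2 ⟨hT', hST.symm⟩))
    rw [heq, hST]
  · intro S hS
    exact hφmem S.card S (mem_filter.2 ⟨hS, rfl⟩)

private noncomputable def psiAux {n c : ℕ} (Φ : Finset (Fin c) → Finset (Fin c))
    (f : Fin n → Fin c) : Fin n → Fin c :=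
  if h : (Finset.image f Finset.univ).card = (Φ (Finset.image f Finset.univ)).card then
    fun i => ((Finset.equivOfCardEq h) ⟨f i, Finset.mem_image_of_mem f (Finset.mem_univ i)⟩ : Fin c)
  else f

private lemma psiAux_eq {n c : ℕ} (Φ : Finset (Fin c) → Finset (Fin c)) (f : Fin n → Fin c)
    (h : (Finset.image f Finset.univ).card = (Φ (Finset.image f Finset.univ)).card) :
    psiAux Φ f = fun i =>
      ((Finset.equivOfCardEq h) ⟨f i, Finset.mem_image_of_mem f (Finset.mem_univ i)⟩ : Fin c) :=
  dif_pos h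

private lemma psiAux_image {n c : ℕ} (Φ : Finset (Fin c) → Finset (Fin c)) (f : Fin n → Fin c)
    (h : (Finset.image f Finset.univ).card = (Φ (Finset.image f Finset.univ)).card) :
    Finset.image (psiAux Φ f) Finset.univ = Φ (Finset.image f Finset.univ) := by
  rw [psiAux_eq Φ f h]
  ext x
  simp only [Finset.mem_image, Finset.mem_univ, true_and]
  constructor
  · rintro ⟨i, rfl⟩
    exact ((Finset.equivOfCardEq h) ⟨f i, Finset.mem_image_of_mem f (Finset.mem_univ i)⟩).2
  · intro hx
    obtain ⟨y, hy⟩ := (Finset.equivOfCardEq h).surjective ⟨x, hx⟩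
    have hy2 := y.2
    rw [Finset.mem_image] at hy2
    obtain ⟨i, -, hi⟩ := hy2
    refine ⟨i, ?_⟩
    have hsub : (⟨f i, Finset.mem_image_of_mem f (Finset.mem_univ i)⟩ :
        {z // z ∈ Finset.image f Finset.univ}) = y := Subtype.ext hi
    rw [hsub, hy]

private lemma aux_val_inj {c : ℕ} (Φ : Finset (Fin c) → Finset (Fin c)) :
    ∀ S T : Finset (Fin c), S = T →
    ∀ (hS : S.card = (Φ S).card) (hT : T.card = (Φ T).card) (a b : Fin c)
      (ha : a ∈ S) (hb : b ∈ T),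
      ((Finset.equivOfCardEq hS ⟨a, ha⟩ : Fin c) = (Finset.equivOfCardEq hT ⟨b, hb⟩ : Fin c)) →
      a = b := by
  rintro S T rfl hS hT a b ha hb h
  have h2 : Finset.equivOfCardEq hS ⟨a, ha⟩ = Finset.equivOfCardEq hS ⟨b, hb⟩ := Subtype.ext h
  exact congrArg Subtype.val ((Finset.equivOfCardEq hS).injective h2)

/-- Erdős–Ko–Rado-type bound for functions: if `n ≥ 2`, `c ≥ 2n`, and `F` is a family of
functions `f : Fin n → Fin c` any two of whose images intersect, then `|F| ≤ n·c^(n-1)`. -/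
theorem intersecting_images_card_le (n c : ℕ) (hn : 2 ≤ n) (hc : 2 * n ≤ c)
    (F : Finset (Fin n → Fin c))
    (hF : ∀ f ∈ F, ∀ g ∈ F, ∃ i j, f i = g j) :
    F.card ≤ n * c ^ (n - 1) := by
  classical
  have hc0 : 0 < c := by omega
  have hn0 : 0 < n := by omega
  set x₀ : Fin c := ⟨0, hc0⟩ with hx₀
  set 𝒮 : Finset (Finset (Fin c)) := F.image (fun f => Finset.image f Finset.univ) with h𝒮
  obtain ⟨Φ, hΦinj, hΦmem⟩ := exists_size_preserving_inj hc hc0 𝒮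
    (by
      intro S hS
      haveI : Nonempty (Fin n) := ⟨⟨0, by omega⟩⟩
      obtain ⟨f, hf, rfl⟩ := mem_image.1 hS
      exact (Finset.univ_nonempty).image f)
    (by
      intro S hS
      obtain ⟨f, hf, rfl⟩ := mem_image.1 hS
      calc (Finset.image f Finset.univ).card ≤ (Finset.univ : Finset (Fin n)).card :=
            Finset.card_image_le
        _ = n := by simp)
    (by
      intro S hS T hT hdis
      obtain ⟨f, hf, rfl⟩ := mem_image.1 hS
      obtain ⟨g, hg, rfl⟩ := mem_image.1 hT
      obtain ⟨i, j, hij⟩ := hF f hf g hg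
      exact (Finset.disjoint_left.1 hdis (Finset.mem_image_of_mem f (mem_univ i)))
        (hij ▸ Finset.mem_image_of_mem g (mem_univ j)))
  have hmemS : ∀ f ∈ F, Finset.image f Finset.univ ∈ 𝒮 := fun f hf => mem_image_of_mem _ hf
  have hP : ∀ f ∈ F,
      (Finset.image f Finset.univ).card = (Φ (Finset.image f Finset.univ)).card :=
    fun f hf => ((hΦmem _ (hmemS f hf)).2).symm
  -- the injection
  have hinj : Set.InjOn (psiAux Φ) (F : Set (Fin n → Fin c)) := by
    intro f hf g hg heq
    have hf' := mem_coe.1 hf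
    have hg' := mem_coe.1 hg
    have himeq : Finset.image f Finset.univ = Finset.image g Finset.univ := by
      apply hΦinj (mem_coe.2 (hmemS f hf')) (mem_coe.2 (hmemS g hg'))
      rw [← psiAux_image Φ f (hP f hf'), ← psiAux_image Φ g (hP g hg'), heq]
    funext i
    have h1 := congrFun heq i
    rw [psiAux_eq Φ f (hP f hf'), psiAux_eq Φ g (hP g hg')] at h1
    exact aux_val_inj Φ _ _ himeq (hP f hf') (hP g hg') (f i) (g i)
      (Finset.mem_image_of_mem f (mem_univ i)) (Finset.mem_image_of_mem g (mem_univ i)) h1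
  have hmaps : ∀ f ∈ F, psiAux Φ f ∈ Finset.univ.filter
      (fun g : Fin n → Fin c => ∃ i, g i = x₀) := by
    intro f hf
    have hx : x₀ ∈ Finset.image (psiAux Φ f) Finset.univ := by
      rw [psiAux_image Φ f (hP f hf)]
      exact (hΦmem _ (hmemS f hf)).1
    rw [Finset.mem_image] at hx
    obtain ⟨i, -, hi⟩ := hx
    exact mem_filter.2 ⟨mem_univ _, ⟨i, hi⟩⟩
  have hle : F.card ≤ (Finset.univ.filter (fun g : Fin n → Fin c => ∃ i, g i = x₀)).card :=
    card_le_card_of_injOn (psiAux Φ) hmaps hinj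
  have hsub : Finset.univ.filter (fun g : Fin n → Fin c => ∃ i, g i = x₀) ⊆
      Finset.univ.biUnion (fun i : Fin n =>
        Finset.univ.filter fun g : Fin n → Fin c => g i = x₀) := by
    intro g hg
    obtain ⟨-, i, hi⟩ := mem_filter.1 hg
    exact mem_biUnion.2 ⟨i, mem_univ _, mem_filter.2 ⟨mem_univ _, hi⟩⟩
  calc F.card ≤ (Finset.univ.filter (fun g : Fin n → Fin c => ∃ i, g i = x₀)).card := hle
    _ ≤ (Finset.univ.biUnion (fun i : Fin n =>
        Finset.univ.filter fun g : Fin n → Fin c => g i = x₀)).card := card_le_card hsub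
    _ ≤ ∑ i : Fin n, (Finset.univ.filter fun g : Fin n → Fin c => g i = x₀).card :=
        card_biUnion_le
    _ = n * c ^ (n - 1) := by
        rw [Finset.sum_congr rfl (fun i _ => fiber_card hn0 i x₀)]
        simp [mul_comm]
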